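/- Truncation error bound for the inverted errors (Lemma A.4 of the paper, part 1): In the TMA(1) setup, define the truncated version ε̃_t(θ) = σ^{-1}( X_t + Σ_{j=1}^{t−1} ( ∏_{i=1}^{j} A_{t−i}(θ) ) X_{t−j} ) for t ≥ 1. Then almost surely the random variable S = Σ_{j=0}^∞ c₁^j |X_{−j}| is finite and for every integer t ≥ 1 and every θ ∈ Θ, |ε̃_t(θ) − ε_t(θ)| ≤ c₂^{-1/2} c₁^t S. -/

import Mathlib

open MeasureTheory ProbabilityTheory

/-- TMA(1) parameter space `Θ = {(φ, ξ, σ²) : |φ| ≤ c₁, |φ+ξ| ≤ c₁, c₂ ≤ σ² ≤ c₃}`. -/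
def tmaTheta (c₁ c₂ c₃ : ℝ) : Set (ℝ × ℝ × ℝ) :=
  {θ | |θ.1| ≤ c₁ ∧ |θ.1 + θ.2.1| ≤ c₁ ∧ c₂ ≤ θ.2.2 ∧ θ.2.2 ≤ c₃}

/-- Inversion coefficient `A_t(θ) = -(φ + ξ·1{X_t ≤ u})`. -/
noncomputable def tmaA {Ω : Type*} (X : ℤ → Ω → ℝ) (u : ℝ) (θ : ℝ × ℝ × ℝ)
    (t : ℤ) (ω : Ω) : ℝ :=
  -(θ.1 + θ.2.1 * (if X t ω ≤ u then 1 else 0))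

/-- Inverted error `ε_t(θ) = σ⁻¹(X_t + Σ_{j≥1} (∏_{i=1}^j A_{t−i}(θ)) X_{t−j})`, written as
`σ⁻¹ Σ_{j≥0} (∏_{i=1}^j A_{t−i}(θ)) X_{t−j}` (the `j = 0` term is `X_t`), `σ = √(σ²)`. -/
noncomputable def tmaEps {Ω : Type*} (X : ℤ → Ω → ℝ) (u : ℝ) (θ : ℝ × ℝ × ℝ)
    (t : ℤ) (ω : Ω) : ℝ :=
  (Real.sqrt θ.2.2)⁻¹ *
    ∑' j : ℕ, (∏ i ∈ Finset.Icc 1 j, tmaA X u θ (t - (i : ℤ)) ω) * X (t - j) ω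

/-- Truncated inverted error `ε̃_t(θ) = σ⁻¹(X_t + Σ_{j=1}^{t−1} (∏_{i=1}^j A_{t−i}(θ)) X_{t−j})`,
written as `σ⁻¹ Σ_{j=0}^{t−1} (∏_{i=1}^j A_{t−i}(θ)) X_{t−j}`. -/
noncomputable def tmaEpsT {Ω : Type*} (X : ℤ → Ω → ℝ) (u : ℝ) (θ : ℝ × ℝ × ℝ)
    (t : ℕ) (ω : Ω) : ℝ :=
  (Real.sqrt θ.2.2)⁻¹ *
    ∑ j ∈ Finset.range t, (∏ i ∈ Finset.Icc 1 j, tmaA X u θ ((t : ℤ) - (i : ℤ)) ω) *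
      X ((t : ℤ) - (j : ℤ)) ω

set_option maxHeartbeats 800000

namespace TMAaux
open Real

lemma gauss_abs_lt_top : ∫⁻ x, (‖x‖₊ : ENNReal) ∂(gaussianReal 0 1) < ⊤ := by
  have hint : Integrable (fun x : ℝ => gaussianPDFReal 0 1 x * |x|) := by
    have h0 : Integrable (fun x : ℝ => x ^ (1 : ℝ) * Real.exp (-(1/2 : ℝ) * x ^ 2)) :=
      integrable_rpow_mul_exp_neg_mul_sq (by norm_num) (by norm_num)
    have h1 : Integrable (fun x : ℝ => x * Real.exp (-(1/2 : ℝ) * x ^ 2)) := by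
      simpa [Real.rpow_one] using h0
    have h2 := (h1.abs.const_mul ((Real.sqrt (2 * Real.pi))⁻¹))
    refine h2.congr (Filter.Eventually.of_forall fun x => ?_)
    simp only [gaussianPDFReal, NNReal.coe_one, mul_one, sub_zero]
    rw [abs_mul, abs_of_nonneg (Real.exp_pos _).le]
    ring_nf
  rw [gaussianReal_of_var_ne_zero 0 one_ne_zero,
    lintegral_withDensity_eq_lintegral_mul _ (measurable_gaussianPDF 0 1)
      (measurable_nnnorm.coe_nnreal_ennreal)]
  have heq : ∀ x : ℝ, (gaussianPDF 0 1 * fun x : ℝ => (‖x‖₊ : ENNReal)) x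
      = ENNReal.ofReal (gaussianPDFReal 0 1 x * |x|) := by
    intro x
    simp only [Pi.mul_apply, gaussianPDF]
    rw [ENNReal.ofReal_mul (gaussianPDFReal_nonneg 0 1 x)]
    congr 1
    simp [← enorm_eq_nnnorm, Real.enorm_eq_ofReal_abs]
  calc ∫⁻ x, (gaussianPDF 0 1 * fun x : ℝ => (‖x‖₊ : ENNReal)) x
      = ∫⁻ x, ENNReal.ofReal (gaussianPDFReal 0 1 x * |x|) := by
        simp_rw [heq]
    _ ≤ ∫⁻ x, (‖gaussianPDFReal 0 1 x * |x|‖₊ : ENNReal) := by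
        refine lintegral_mono fun x => ?_
        rw [← enorm_eq_nnnorm, Real.enorm_eq_ofReal_abs]
        exact ENNReal.ofReal_le_ofReal (le_abs_self _)
    _ < ⊤ := hint.2


lemma as_summable {Ω : Type*} [MeasurableSpace Ω] (P : Measure Ω) [IsProbabilityMeasure P]
    {u c₁ c₂ c₃ : ℝ} (hc₁ : 0 < c₁) (hc₁' : c₁ < 1)
    {φ₀ ξ₀ s₀ : ℝ} (hφ : |φ₀| ≤ c₁) (hφξ : |φ₀ + ξ₀| ≤ c₁) (hs₀ : s₀ ≤ c₃)
    (e X : ℤ → Ω → ℝ) (he : ∀ t, Measurable (e t)) (hX : ∀ t, Measurable (X t))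
    (heG : ∀ t, P.map (e t) = gaussianReal 0 1)
    (hmodel : ∀ᵐ ω ∂P, ∀ t : ℤ, X t ω =
      (φ₀ + ξ₀ * (if X (t - 1) ω ≤ u then 1 else 0)) * Real.sqrt s₀ * e (t - 1) ω
        + Real.sqrt s₀ * e t ω) :
    ∀ᵐ ω ∂P, Summable (fun j : ℕ => c₁ ^ j * |X (-(j : ℤ)) ω|) := by
  set M : ENNReal := ∫⁻ x, (‖x‖₊ : ENNReal) ∂(gaussianReal 0 1) with hM_def
  have hM : M < ⊤ := gauss_abs_lt_top
  have he_int : ∀ t : ℤ, ∫⁻ ω, (‖e t ω‖₊ : ENNReal) ∂P = M := by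
    intro t
    rw [hM_def, ← heG t, lintegral_map measurable_nnnorm.coe_nnreal_ennreal (he t)]
  have hXle : ∀ᵐ ω ∂P, ∀ t : ℤ, (‖X t ω‖₊ : ENNReal) ≤
      ENNReal.ofReal (Real.sqrt c₃) * ((‖e (t - 1) ω‖₊ : ENNReal) + ‖e t ω‖₊) := by
    filter_upwards [hmodel] with ω hω t
    have hbd : |X t ω| ≤ Real.sqrt c₃ * (|e (t - 1) ω| + |e t ω|) := by
      rw [hω t]
      have hb : |φ₀ + ξ₀ * (if X (t - 1) ω ≤ u then 1 else 0)| ≤ 1 := by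
        split <;> simp only [mul_one, mul_zero, add_zero] <;> linarith [hφ, hφξ]
      have hsq : Real.sqrt s₀ ≤ Real.sqrt c₃ := Real.sqrt_le_sqrt hs₀
      have h0 : (0:ℝ) ≤ Real.sqrt s₀ := Real.sqrt_nonneg _
      calc |_ * Real.sqrt s₀ * e (t-1) ω + Real.sqrt s₀ * e t ω|
          ≤ |_ * Real.sqrt s₀ * e (t-1) ω| + |Real.sqrt s₀ * e t ω| := abs_add_le _ _
        _ = |φ₀ + ξ₀ * (if X (t - 1) ω ≤ u then 1 else 0)| * Real.sqrt s₀ * |e (t-1) ω|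
            + Real.sqrt s₀ * |e t ω| := by
            rw [abs_mul, abs_mul, abs_mul, abs_of_nonneg h0]
        _ ≤ 1 * Real.sqrt c₃ * |e (t-1) ω| + Real.sqrt c₃ * |e t ω| := by
            gcongr <;> first | exact hb | exact hsq | positivity
        _ = Real.sqrt c₃ * (|e (t-1) ω| + |e t ω|) := by ring
    calc (‖X t ω‖₊ : ENNReal) = ENNReal.ofReal |X t ω| := by rw [← enorm_eq_nnnorm, Real.enorm_eq_ofReal_abs]
      _ ≤ ENNReal.ofReal (Real.sqrt c₃ * (|e (t - 1) ω| + |e t ω|)) :=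
          ENNReal.ofReal_le_ofReal hbd
      _ = ENNReal.ofReal (Real.sqrt c₃) * ((‖e (t - 1) ω‖₊ : ENNReal) + ‖e t ω‖₊) := by
          rw [ENNReal.ofReal_mul (Real.sqrt_nonneg _),
            ENNReal.ofReal_add (abs_nonneg _) (abs_nonneg _),
            ← enorm_eq_nnnorm, Real.enorm_eq_ofReal_abs, ← enorm_eq_nnnorm, Real.enorm_eq_ofReal_abs]
  set C : ENNReal := ENNReal.ofReal (Real.sqrt c₃) * (M + M) with hC_def
  have hC : C ≠ ⊤ := ENNReal.mul_ne_top ENNReal.ofReal_ne_top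
    (ENNReal.add_ne_top.2 ⟨hM.ne, hM.ne⟩)
  have hXint : ∀ t : ℤ, ∫⁻ ω, (‖X t ω‖₊ : ENNReal) ∂P ≤ C := by
    intro t
    calc ∫⁻ ω, (‖X t ω‖₊ : ENNReal) ∂P
        ≤ ∫⁻ ω, ENNReal.ofReal (Real.sqrt c₃) *
            ((‖e (t - 1) ω‖₊ : ENNReal) + ‖e t ω‖₊) ∂P :=
          lintegral_mono_ae (hXle.mono fun ω h => h t)
      _ = ENNReal.ofReal (Real.sqrt c₃) *
            (∫⁻ ω, ((‖e (t - 1) ω‖₊ : ENNReal) + ‖e t ω‖₊) ∂P) := by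
          rw [lintegral_const_mul _ (f := fun ω => (‖e (t - 1) ω‖₊ : ENNReal) + ‖e t ω‖₊) (((he _).nnnorm.coe_nnreal_ennreal).add
            ((he _).nnnorm.coe_nnreal_ennreal))]
      _ = C := by
          rw [hC_def, lintegral_add_left ((he _).nnnorm.coe_nnreal_ennreal),
            he_int, he_int]
  set f : ℕ → Ω → ENNReal := fun j ω => ENNReal.ofReal (c₁ ^ j * |X (-(j : ℤ)) ω|) with hf_def
  have hfm : ∀ j, Measurable (f j) := fun j =>
    ((hX _).abs.const_mul _).ennreal_ofReal
  have htot : ∫⁻ ω, ∑' j, f j ω ∂P < ⊤ := by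
    rw [lintegral_tsum fun j => (hfm j).aemeasurable]
    have hje : ∀ j : ℕ, ∫⁻ ω, f j ω ∂P ≤ ENNReal.ofReal c₁ ^ j * C := by
      intro j
      have : ∀ ω, f j ω = ENNReal.ofReal c₁ ^ j * (‖X (-(j : ℤ)) ω‖₊ : ENNReal) := by
        intro ω
        simp only [hf_def]
        rw [ENNReal.ofReal_mul (by positivity), ← ENNReal.ofReal_pow hc₁.le,
          ← enorm_eq_nnnorm, Real.enorm_eq_ofReal_abs]
      simp_rw [this]
      rw [lintegral_const_mul _ ((hX _).nnnorm.coe_nnreal_ennreal)]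
      exact mul_le_mul_right (hXint _) _
    calc ∑' j, ∫⁻ ω, f j ω ∂P ≤ ∑' j : ℕ, ENNReal.ofReal c₁ ^ j * C :=
          ENNReal.tsum_le_tsum hje
      _ = (∑' j : ℕ, ENNReal.ofReal c₁ ^ j) * C := ENNReal.tsum_mul_right
      _ = (1 - ENNReal.ofReal c₁)⁻¹ * C := by rw [ENNReal.tsum_geometric]
      _ < ⊤ := by
          refine ENNReal.mul_lt_top ?_ hC.lt_top
          rw [ENNReal.inv_lt_top]
          rw [pos_iff_ne_zero]
          rw [Ne, tsub_eq_zero_iff_le, not_le]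
          exact ENNReal.ofReal_lt_one.2 hc₁'
  have hae : ∀ᵐ ω ∂P, ∑' j, f j ω < ⊤ :=
    ae_lt_top (Measurable.ennreal_tsum hfm) htot.ne
  filter_upwards [hae] with ω hω
  have hsum := ENNReal.summable_toReal hω.ne
  refine hsum.congr fun j => ?_
  simp only [hf_def]
  exact ENNReal.toReal_ofReal (by positivity)

lemma tma_det {Ω : Type*} (X : ℤ → Ω → ℝ) (u : ℝ) {c₁ c₂ c₃ : ℝ}
    (hc₁ : 0 < c₁) (hc₂ : 0 < c₂) (ω : Ω)
    (hS : Summable fun j : ℕ => c₁ ^ j * |X (-(j : ℤ)) ω|)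
    (t : ℕ) (θ : ℝ × ℝ × ℝ) (hθ : θ ∈ tmaTheta c₁ c₂ c₃) :
    |tmaEpsT X u θ t ω - tmaEps X u θ (t : ℤ) ω|
      ≤ (Real.sqrt c₂)⁻¹ * c₁ ^ t * ∑' j : ℕ, c₁ ^ j * |X (-(j : ℤ)) ω| := by
  obtain ⟨hφ, hφξ, hσ, hσ'⟩ := hθ
  have hA : ∀ s : ℤ, |tmaA X u θ s ω| ≤ c₁ := by
    intro s
    unfold tmaA
    rw [abs_neg]
    split <;> simpa
  set a : ℕ → ℝ := fun j =>
    (∏ i ∈ Finset.Icc 1 j, tmaA X u θ ((t : ℤ) - (i : ℤ)) ω) * X ((t : ℤ) - (j : ℤ)) ω with ha_def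
  have habs : ∀ j, |a j| ≤ c₁ ^ j * |X ((t : ℤ) - (j : ℤ)) ω| := by
    intro j
    rw [ha_def, abs_mul]
    gcongr
    calc |∏ i ∈ Finset.Icc 1 j, tmaA X u θ ((t : ℤ) - (i : ℤ)) ω|
        ≤ ∏ i ∈ Finset.Icc 1 j, |tmaA X u θ ((t : ℤ) - (i : ℤ)) ω| := Finset.abs_prod _ _ |>.le
      _ ≤ ∏ _i ∈ Finset.Icc 1 j, c₁ := Finset.prod_le_prod (fun _ _ => abs_nonneg _)
            (fun i _ => hA _)
      _ = c₁ ^ j := by rw [Finset.prod_const, Nat.card_Icc]; norm_num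
  have htail : ∀ k : ℕ, c₁ ^ (k + t) * |X ((t : ℤ) - ((k + t : ℕ) : ℤ)) ω|
      = c₁ ^ t * (c₁ ^ k * |X (-(k : ℤ)) ω|) := by
    intro k
    have : (t : ℤ) - ((k + t : ℕ) : ℤ) = -(k : ℤ) := by push_cast; ring
    rw [this, pow_add]; ring
  have hb : Summable fun j : ℕ => c₁ ^ j * |X ((t : ℤ) - (j : ℤ)) ω| := by
    rw [← summable_nat_add_iff t]
    exact ((hS.mul_left (c₁ ^ t)).congr fun k => (htail k).symm)
  have ha : Summable a :=
    Summable.of_norm_bounded hb fun j => by rw [Real.norm_eq_abs]; exact habs j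
  have hsplit := Summable.sum_add_tsum_nat_add (f := a) t ha
  have hst : 0 ≤ (Real.sqrt θ.2.2)⁻¹ := inv_nonneg.2 (Real.sqrt_nonneg _)
  have key : tmaEpsT X u θ t ω - tmaEps X u θ (t : ℤ) ω
      = -((Real.sqrt θ.2.2)⁻¹ * ∑' k, a (k + t)) := by
    rw [tmaEpsT, tmaEps, ← hsplit]
    ring
  rw [key, abs_neg, abs_mul, abs_of_nonneg hst]
  have hta : Summable fun k => |a (k + t)| := ((summable_nat_add_iff t).2 ha).abs
  have h1 : |∑' k, a (k + t)| ≤ c₁ ^ t * ∑' j : ℕ, c₁ ^ j * |X (-(j : ℤ)) ω| := by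
    have hta' : Summable fun k => ‖a (k + t)‖ := by simpa [Real.norm_eq_abs] using hta
    calc |∑' k, a (k + t)| ≤ ∑' k, |a (k + t)| := by
          simpa [Real.norm_eq_abs] using norm_tsum_le_tsum_norm hta'
      _ ≤ ∑' k : ℕ, c₁ ^ t * (c₁ ^ k * |X (-(k : ℤ)) ω|) := by
          refine Summable.tsum_le_tsum (fun k => ?_) hta (hS.mul_left _)
          calc |a (k + t)| ≤ c₁ ^ (k + t) * |X ((t : ℤ) - ((k + t : ℕ) : ℤ)) ω| := habs (k + t)
            _ = _ := htail k
      _ = c₁ ^ t * ∑' j : ℕ, c₁ ^ j * |X (-(j : ℤ)) ω| := tsum_mul_left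
  have hσinv : (Real.sqrt θ.2.2)⁻¹ ≤ (Real.sqrt c₂)⁻¹ := by
    apply inv_anti₀ (Real.sqrt_pos.2 hc₂)
    exact Real.sqrt_le_sqrt hσ
  calc (Real.sqrt θ.2.2)⁻¹ * |∑' k, a (k + t)|
      ≤ (Real.sqrt c₂)⁻¹ * (c₁ ^ t * ∑' j : ℕ, c₁ ^ j * |X (-(j : ℤ)) ω|) := by
        apply mul_le_mul hσinv h1 (abs_nonneg _)
        positivity
    _ = _ := by ring

end TMAaux

/-- Lemma A.4, part 1 (truncation error bound for the inverted errors): almost surely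
`S = Σ_{j≥0} c₁^j |X_{−j}|` is finite and for every `t ≥ 1` and `θ ∈ Θ`,
`|ε̃_t(θ) − ε_t(θ)| ≤ c₂^{-1/2} c₁^t S`. -/
theorem stmt7 {Ω : Type*} [MeasurableSpace Ω] (P : Measure Ω) [IsProbabilityMeasure P]
    (u c₁ c₂ c₃ : ℝ) (hc₁ : 0 < c₁) (hc₁' : c₁ < 1) (hc₂ : 0 < c₂) (hc₂₃ : c₂ ≤ c₃)
    (φ₀ ξ₀ s₀ : ℝ) (hθ₀ : (φ₀, ξ₀, s₀) ∈ tmaTheta c₁ c₂ c₃)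
    (e X : ℤ → Ω → ℝ) (he : ∀ t, Measurable (e t)) (hX : ∀ t, Measurable (X t))
    (heG : ∀ t, P.map (e t) = gaussianReal 0 1)
    (hmodel : ∀ᵐ ω ∂P, ∀ t : ℤ, X t ω =
      (φ₀ + ξ₀ * (if X (t - 1) ω ≤ u then 1 else 0)) * Real.sqrt s₀ * e (t - 1) ω
        + Real.sqrt s₀ * e t ω) :
    ∀ᵐ ω ∂P,
      Summable (fun j : ℕ => c₁ ^ j * |X (-(j : ℤ)) ω|) ∧
      ∀ t : ℕ, 1 ≤ t → ∀ θ ∈ tmaTheta c₁ c₂ c₃,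
        |tmaEpsT X u θ t ω - tmaEps X u θ (t : ℤ) ω|
          ≤ (Real.sqrt c₂)⁻¹ * c₁ ^ t * ∑' j : ℕ, c₁ ^ j * |X (-(j : ℤ)) ω| := by
  obtain ⟨hφ, hφξ, hσ, hσ'⟩ := hθ₀
  filter_upwards [TMAaux.as_summable P (c₂ := c₂) hc₁ hc₁' hφ hφξ hσ' e X he hX heG hmodel] with ω hS
  exact ⟨hS, fun t _ θ hθ => TMAaux.tma_det X u hc₁ hc₂ ω hS t θ hθ⟩
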